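/- Let (Z_k) be a sequence in 2^ℕ, let (c_k) be reals with 0 < c_k ≤ 1 for each k and Σ_k c_k = 1, and let μ = Σ_k c_k·δ_{Z_k}, where δ_Z is the Dirac measure concentrated on {Z}. Then μ is ML absolutely continuous if and only if every Z_k is Martin-Löf random. -/

import Mathlib

open MeasureTheory Filter

/-- Cantor space: the space of infinite binary sequences. -/
abbrev Cantor : Type := ℕ → Bool

/-- Finite binary strings. -/
abbrev BStr : Type := List Bool

/-- The cylinder set of sequences extending the string `x`. -/
def cyl (x : BStr) : Set Cantor := {Z | ∀ i : Fin x.length, Z i.1 = x.get i}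

/-- The string of the first `n` bits of `Z`. -/
def seg (Z : Cantor) (n : ℕ) : BStr := List.ofFn fun i : Fin n => Z i.1

/-- `lam` is the uniform (fair-coin product) measure: every cylinder `[x]`
has measure `2^{-|x|}`. -/
def IsUniform (lam : Measure Cantor) : Prop :=
  ∀ x : BStr, lam (cyl x) = (2 : ENNReal)⁻¹ ^ x.length

/-- `(G_m)` is a Martin-Löf test with respect to the measure `ρ`:
the sets `G_m` are uniformly effectively open and `ρ (G_m) ≤ 2^{-m}`. -/
def IsMLTest (ρ : Measure Cantor) (G : ℕ → Set Cantor) : Prop :=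
  (∃ σ : ℕ → ℕ → BStr, Computable₂ σ ∧ ∀ m, G m = ⋃ i, cyl (σ m i)) ∧
  ∀ m, ρ (G m) ≤ (2 : ENNReal)⁻¹ ^ m

/-- `μ` is Martin-Löf absolutely continuous in `ρ`: `inf_m μ(G_m) = 0`
for every `ρ`-Martin-Löf test `(G_m)`. -/
def MLAC (μ ρ : Measure Cantor) : Prop :=
  ∀ G : ℕ → Set Cantor, IsMLTest ρ G → ⨅ m, μ (G m) = 0

/-- `Z` is Martin-Löf random with respect to `lam`. -/
def MLRandom (lam : Measure Cantor) (Z : Cantor) : Prop :=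
  ∀ G : ℕ → Set Cantor, IsMLTest lam G → Z ∉ ⋂ m, G m

/-- `ρ` is a computable measure: `ρ [x]` is a computable real, uniformly in `x`. -/
def ComputableMeasure (ρ : Measure Cantor) : Prop :=
  ∃ q : BStr → ℕ → ℚ, Computable₂ q ∧
    ∀ x k, |(q x k : ℝ) - (ρ (cyl x)).toReal| ≤ (2 : ℝ)⁻¹ ^ k

/-- `U` is a universal plain machine. -/
def UniversalPlain (U : BStr →. BStr) : Prop :=
  Partrec U ∧ ∀ M : BStr →. BStr, Partrec M →
    ∃ c : ℕ, ∀ p x, x ∈ M p → ∃ q : BStr, q.length ≤ p.length + c ∧ x ∈ U q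

/-- The domain of `M` is an antichain under the prefix relation. -/
def PrefixFreeDom (M : BStr →. BStr) : Prop :=
  ∀ p q : BStr, (M p).Dom → (M q).Dom → p <+: q → p = q

/-- `U` is a universal prefix-free machine. -/
def UniversalPrefixFree (U : BStr →. BStr) : Prop :=
  Partrec U ∧ PrefixFreeDom U ∧
  ∀ M : BStr →. BStr, Partrec M → PrefixFreeDom M →
    ∃ c : ℕ, ∀ p x, x ∈ M p → ∃ q : BStr, q.length ≤ p.length + c ∧ x ∈ U q

/-- Kolmogorov complexity of the string `x` with respect to the machine `U`:
the minimal length of a `U`-description of `x`. -/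
noncomputable def cpx (U : BStr →. BStr) (x : BStr) : ℕ :=
  sInf {n | ∃ q : BStr, q.length = n ∧ x ∈ U q}

/-- A natural number `n` identified with the string `0^n`. -/
def numStr (n : ℕ) : BStr := List.replicate n false

/-- Complexity of the natural number `n` (i.e., of the string `0^n`). -/
noncomputable def cpxN (U : BStr →. BStr) (n : ℕ) : ℕ := cpx U (numStr n)

/-- The `μ`-average complexity of the strings of length `n`:
`Σ_{|x|=n} cpx(x) · μ[x]`. -/
noncomputable def avgCpx (U : BStr →. BStr) (μ : Measure Cantor) (n : ℕ) : ℝ :=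
  ∑ v : Fin n → Bool, (cpx U (List.ofFn v) : ℝ) * (μ (cyl (List.ofFn v))).toReal

/-- A measure `μ` is trivial for the complexity given by the machine `U`
(e.g. K-trivial when `U` is the universal prefix-free machine, C-trivial
when `U` is the universal plain machine). -/
def MeasTrivial (U : BStr →. BStr) (μ : Measure Cantor) : Prop :=
  ∃ c : ℝ, ∀ n : ℕ, avgCpx U μ n ≤ (cpxN U n : ℝ) + c

lemma measurableSet_cyl (x : BStr) : MeasurableSet (cyl x) := by
  have h : cyl x = ⋂ i : Fin x.length, (fun Z : Cantor => Z i.1) ⁻¹' {x.get i} := by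
    ext Zz; simp [cyl]
  rw [h]
  exact MeasurableSet.iInter fun i => (measurable_pi_apply i.1) (measurableSet_singleton _)

set_option maxHeartbeats 1000000 in
/-- a countable convex combination `μ = Σ_k c_k δ_{Z_k}`
(`0 < c_k ≤ 1`, `Σ_k c_k = 1`) is ML absolutely continuous iff every `Z_k`
is Martin-Löf random. -/
theorem discrete_measure_MLAC_iff_atoms_random
    (lam : Measure Cantor) (hlam : IsUniform lam)
    (Z : ℕ → Cantor) (c : ℕ → ℝ)
    (hpos : ∀ k, 0 < c k) (hle : ∀ k, c k ≤ 1) (hsum : ∑' k, c k = 1) :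
    MLAC (Measure.sum fun k => ENNReal.ofReal (c k) • Measure.dirac (Z k)) lam ↔
      ∀ k, MLRandom lam (Z k) := by
  set μ : Measure Cantor := Measure.sum fun k => ENNReal.ofReal (c k) • Measure.dirac (Z k)
    with hμ
  constructor
  · -- MLAC → all random
    intro hmlac k G hG hZk
    obtain ⟨⟨σ, hσc, hGσ⟩, hGb⟩ := hG
    have hmeas : ∀ m, MeasurableSet (G m) := by
      intro m; rw [hGσ m]; exact MeasurableSet.iUnion fun i => measurableSet_cyl _
    have hlow : ∀ m, ENNReal.ofReal (c k) ≤ μ (G m) := by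
      intro m
      have h1 : (ENNReal.ofReal (c k) • Measure.dirac (Z k)) (G m) ≤ μ (G m) :=
        Measure.le_iff'.mp (Measure.le_sum _ k) (G m)
      have h2 : Measure.dirac (Z k) (G m) = 1 := by
        rw [Measure.dirac_apply' _ (hmeas m),
          Set.indicator_of_mem (Set.mem_iInter.mp hZk m)]
        rfl
      rwa [Measure.smul_apply, h2, smul_eq_mul, mul_one] at h1
    have h0 : ⨅ m, μ (G m) = 0 := hmlac G ⟨⟨σ, hσc, hGσ⟩, hGb⟩
    have : ENNReal.ofReal (c k) ≤ 0 := h0 ▸ le_iInf hlow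
    exact absurd (le_antisymm this bot_le)
      (ne_of_gt (ENNReal.ofReal_pos.mpr (hpos k)))
  · -- all random → MLAC
    intro hrand G hG
    obtain ⟨⟨σ, hσc, hGσ⟩, hGb⟩ := hG
    have hmeas : ∀ m, MeasurableSet (G m) := by
      intro m; rw [hGσ m]; exact MeasurableSet.iUnion fun i => measurableSet_cyl _
    -- the nested test
    set G' : ℕ → Set Cantor := fun m => ⋃ j, G (m + 1 + j) with hG'
    have hG'anti : ∀ m₁ m₂, m₁ ≤ m₂ → G' m₂ ⊆ G' m₁ := by
      intro m₁ m₂ h x hx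
      obtain ⟨s, ⟨j, rfl⟩, hxs⟩ := hx
      exact Set.mem_iUnion.mpr ⟨j + (m₂ - m₁), by
        rwa [show m₁ + 1 + (j + (m₂ - m₁)) = m₂ + 1 + j by omega]⟩
    have hG'test : IsMLTest lam G' := by
      constructor
      · refine ⟨fun m n => σ (m + 1 + (Nat.unpair n).1) (Nat.unpair n).2, ?_, ?_⟩
        · exact hσc.comp
            ((Primrec.nat_add.comp
                (Primrec.nat_add.comp Primrec.fst (Primrec.const 1))
                (Primrec.fst.comp (Primrec.unpair.comp Primrec.snd))).to_comp)
            ((Primrec.snd.comp (Primrec.unpair.comp Primrec.snd)).to_comp)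
        · intro m
          ext x
          simp only [hG', Set.mem_iUnion]
          constructor
          · rintro ⟨j, hj⟩
            rw [hGσ (m + 1 + j)] at hj
            obtain ⟨i, hi⟩ := Set.mem_iUnion.mp hj
            exact ⟨Nat.pair j i, by simpa [Nat.unpair_pair] using hi⟩
          · rintro ⟨n, hn⟩
            refine ⟨(Nat.unpair n).1, ?_⟩
            rw [hGσ]
            exact Set.mem_iUnion.mpr ⟨(Nat.unpair n).2, hn⟩
      · intro m
        calc lam (G' m) ≤ ∑' j, lam (G (m + 1 + j)) := measure_iUnion_le _
          _ ≤ ∑' j : ℕ, (2 : ENNReal)⁻¹ ^ (m + 1 + j) := ENNReal.tsum_le_tsum (fun j => hGb _)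
          _ = (2 : ENNReal)⁻¹ ^ (m + 1) * ∑' j : ℕ, (2 : ENNReal)⁻¹ ^ j := by
              simp_rw [pow_add]; rw [ENNReal.tsum_mul_left]
          _ = (2 : ENNReal)⁻¹ ^ (m + 1) * 2 := by
              rw [ENNReal.tsum_geometric,
                show (1 : ENNReal) - 2⁻¹ = 2⁻¹ from
                  ENNReal.sub_eq_of_eq_add (by norm_num) ENNReal.inv_two_add_inv_two.symm,
                inv_inv]
          _ = (2 : ENNReal)⁻¹ ^ m := by
              rw [pow_succ, mul_assoc, ENNReal.inv_mul_cancel two_ne_zero ENNReal.ofNat_ne_top,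
                mul_one]
    -- each Z k escapes G' at some level
    have hesc : ∀ k, ∃ m, Z k ∉ G' m := by
      intro k
      have := hrand k G' hG'test
      simpa [Set.mem_iInter, not_forall] using this
    choose φ hφ using hesc
    -- summability facts
    have hsummable : Summable c := by
      by_contra h
      rw [tsum_eq_zero_of_not_summable h] at hsum
      exact one_ne_zero hsum.symm
    have htsum : ∑' k, ENNReal.ofReal (c k) = 1 := by
      rw [← ENNReal.ofReal_tsum_of_nonneg (fun k => (hpos k).le) hsummable, hsum,
        ENNReal.ofReal_one]
    have htail : Filter.Tendsto (fun K => ∑' i, ENNReal.ofReal (c (i + K))) Filter.atTop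
        (nhds 0) :=
      ENNReal.tendsto_sum_nat_add _ (by rw [htsum]; exact ENNReal.one_ne_top)
    -- conclude
    rw [show (0 : ENNReal) = ⊥ from rfl, iInf_eq_bot]
    intro ε hε
    obtain ⟨K, hK⟩ := (htail.eventually_lt_const hε).exists
    set M : ℕ := (Finset.range K).sup φ with hM
    refine ⟨M + 1, ?_⟩
    have hnotin : ∀ k < K, Z k ∉ G (M + 1) := by
      intro k hk hin
      have h1 : Z k ∈ G' M := Set.mem_iUnion.mpr ⟨0, hin⟩
      exact hφ k (hG'anti (φ k) M (Finset.le_sup (Finset.mem_range.mpr hk)) h1)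
    have hμval : μ (G (M + 1)) =
        ∑' k, ENNReal.ofReal (c k) * Measure.dirac (Z k) (G (M + 1)) := by
      rw [hμ, Measure.sum_apply _ (hmeas (M + 1))]
      simp [Measure.smul_apply]
    set f : ℕ → ENNReal := fun k => ENNReal.ofReal (c k) * Measure.dirac (Z k) (G (M + 1))
      with hf
    have hsplit : ∑ i ∈ Finset.range K, f i + ∑' i, f (i + K) = ∑' i, f i :=
      Summable.sum_add_tsum_nat_add' (f := f) (k := K) ENNReal.summable
    have hzero : ∑ i ∈ Finset.range K, f i = 0 := by
      refine Finset.sum_eq_zero fun i hi => ?_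
      rw [hf]
      have : Measure.dirac (Z i) (G (M + 1)) = 0 := by
        rw [Measure.dirac_apply' _ (hmeas (M + 1)),
          Set.indicator_of_notMem (hnotin i (Finset.mem_range.mp hi))]
      simp [this]
    have hbound : ∑' i, f (i + K) ≤ ∑' i, ENNReal.ofReal (c (i + K)) := by
      refine ENNReal.tsum_le_tsum (fun i => ?_)
      rw [hf]
      calc ENNReal.ofReal (c (i + K)) * Measure.dirac (Z (i + K)) (G (M + 1))
          ≤ ENNReal.ofReal (c (i + K)) * 1 := by
            gcongr
            rw [← measure_univ (μ := Measure.dirac (Z (i + K)))]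
            exact measure_mono (Set.subset_univ _)
        _ = _ := mul_one _
    calc μ (G (M + 1)) = ∑' i, f i := hμval
      _ = ∑ i ∈ Finset.range K, f i + ∑' i, f (i + K) := hsplit.symm
      _ = ∑' i, f (i + K) := by rw [hzero, zero_add]
      _ ≤ ∑' i, ENNReal.ofReal (c (i + K)) := hbound
      _ < ε := hK
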